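/- Let (μ_t)_{t>0} be a family of Borel probability measures on ℝ such that t ↦ μ_t(A) is measurable for every Borel set A, and let θ ≥ 0. Suppose that for some q₀ > 0 the function (t,x) ↦ |e^{−t} − e^{−q₀ t − θx}|/t is integrable over (0,∞) × (0,∞) with respect to dt μ_t(dx). Define G(q) = ∫₀^∞ ∫_{(0,∞)} (e^{−t} − e^{−q t − θx})/t μ_t(dx) dt. Then G(q) is finite for every q > 0, G is differentiable on (0,∞), and for every q > 0 one has q·G′(q) = ∫₀^∞ ∫_{(0,∞)} q e^{−q t − θx} μ_t(dx) dt. -/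

import Mathlib

open MeasureTheory Real Set ProbabilityTheory
open scoped ENNReal NNReal

private lemma abs_exp_neg_sub_le' {a b : ℝ} (h : a ≤ b) :
    |Real.exp (-a) - Real.exp (-b)| ≤ |a - b| * Real.exp (-min a b) := by
  rw [min_eq_left h, abs_of_nonneg (sub_nonneg.mpr (Real.exp_le_exp.mpr (neg_le_neg h))),
    abs_of_nonpos (sub_nonpos.mpr h)]
  have hkey := Real.add_one_le_exp (a - b)
  have hmul : Real.exp (a - b) * Real.exp (-a) = Real.exp (-b) := by
    rw [← Real.exp_add]; ring_nf
  nlinarith [Real.exp_pos (-a)]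

lemma abs_exp_neg_sub_le (a b : ℝ) :
    |Real.exp (-a) - Real.exp (-b)| ≤ |a - b| * Real.exp (-min a b) := by
  rcases le_total a b with h | h
  · exact abs_exp_neg_sub_le' h
  · rw [abs_sub_comm, abs_sub_comm a b, min_comm]
    exact abs_exp_neg_sub_le' h

/-- The kernel `t ↦ (μ t).restrict (Ioi 0)` for `t > 0`, `0` otherwise. -/
noncomputable def ladderKernel (μ : ℝ → Measure ℝ)
    (hmeas : ∀ A : Set ℝ, MeasurableSet A → Measurable fun t => μ t A) :
    ProbabilityTheory.Kernel ℝ ℝ where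
  toFun t := if 0 < t then (μ t).restrict (Ioi 0) else 0
  measurable' := by
    refine Measure.measurable_of_measurable_coe _ fun s hs => ?_
    have heq : (fun t => (if 0 < t then (μ t).restrict (Ioi 0) else 0) s)
        = (Ioi (0:ℝ)).indicator (fun t => μ t (s ∩ Ioi 0)) := by
      ext t
      by_cases ht : 0 < t
      · simp [ht, Measure.restrict_apply hs, Set.indicator, Set.mem_Ioi]
      · simp [ht, Set.indicator, Set.mem_Ioi]
    rw [heq]
    exact (hmeas _ (hs.inter measurableSet_Ioi)).indicator measurableSet_Ioi

lemma ladderKernel_apply (μ : ℝ → Measure ℝ)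
    (hmeas : ∀ A : Set ℝ, MeasurableSet A → Measurable fun t => μ t A) (t : ℝ) :
    ladderKernel μ hmeas t = if 0 < t then (μ t).restrict (Ioi 0) else 0 := rfl

theorem ladder_exponent_log_deriv
    (μ : ℝ → Measure ℝ)
    (hprob : ∀ t, 0 < t → IsProbabilityMeasure (μ t))
    (hmeas : ∀ A : Set ℝ, MeasurableSet A → Measurable fun t => μ t A)
    (θ : ℝ) (hθ : 0 ≤ θ)
    (q₀ : ℝ) (hq₀ : 0 < q₀)
    (hint : ∫⁻ t in Ioi (0 : ℝ), ∫⁻ x in Ioi (0 : ℝ),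
        ENNReal.ofReal (|Real.exp (-t) - Real.exp (-(q₀ * t + θ * x))| / t) ∂(μ t) < ⊤)
    (G : ℝ → ℝ)
    (hG : ∀ q : ℝ, G q = ∫ t in Ioi (0 : ℝ), ∫ x in Ioi (0 : ℝ),
        (Real.exp (-t) - Real.exp (-(q * t + θ * x))) / t ∂(μ t)) :
    (∀ q : ℝ, 0 < q → ∫⁻ t in Ioi (0 : ℝ), ∫⁻ x in Ioi (0 : ℝ),
        ENNReal.ofReal (|Real.exp (-t) - Real.exp (-(q * t + θ * x))| / t) ∂(μ t) < ⊤) ∧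
    (∀ q : ℝ, 0 < q → DifferentiableAt ℝ G q) ∧
    (∀ q : ℝ, 0 < q → q * deriv G q
      = ∫ t in Ioi (0 : ℝ), ∫ x in Ioi (0 : ℝ), q * Real.exp (-(q * t + θ * x)) ∂(μ t)) := by
  classical
  set κ := ladderKernel μ hmeas with hκdef
  have hκ : ∀ t : ℝ, 0 < t → κ t = (μ t).restrict (Ioi 0) := by
    intro t ht
    rw [hκdef, ladderKernel_apply, if_pos ht]
  have hκle : ∀ t : ℝ, κ t univ ≤ 1 := by
    intro t
    by_cases ht : 0 < t
    · haveI := hprob t ht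
      rw [hκ t ht, Measure.restrict_apply_univ]
      exact prob_le_one
    · rw [hκdef, ladderKernel_apply, if_neg ht]
      simp
  haveI : IsFiniteKernel κ := ⟨⟨1, ENNReal.one_lt_top, hκle⟩⟩
  set ν := (volume.restrict (Ioi (0:ℝ))) ⊗ₘ κ with hνdef
  -- a.e. support
  have hsupp : ∀ᵐ p : ℝ × ℝ ∂ν, 0 < p.1 ∧ 0 < p.2 := by
    refine (Measure.ae_compProd_iff (p := fun p : ℝ × ℝ => 0 < p.1 ∧ 0 < p.2)
      ((measurableSet_Ioi.preimage measurable_fst).inter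
        (measurableSet_Ioi.preimage measurable_snd))).mpr ?_
    filter_upwards [ae_restrict_mem measurableSet_Ioi] with t ht
    rw [hκ t ht]
    filter_upwards [ae_restrict_mem measurableSet_Ioi] with x hx
    exact ⟨ht, hx⟩
  -- lifting iterated integrals to the compProd measure
  have hlift : ∀ f : ℝ × ℝ → ℝ≥0∞, Measurable f →
      ∫⁻ p, f p ∂ν = ∫⁻ t in Ioi (0:ℝ), ∫⁻ x in Ioi (0:ℝ), f (t, x) ∂(μ t) := by
    intro f hf
    rw [hνdef, Measure.lintegral_compProd hf]
    refine setLIntegral_congr_fun measurableSet_Ioi (fun t ht => ?_)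
    rw [hκ t ht]
  have hliftI : ∀ f : ℝ × ℝ → ℝ, Integrable f ν →
      ∫ p, f p ∂ν = ∫ t in Ioi (0:ℝ), ∫ x in Ioi (0:ℝ), f (t, x) ∂(μ t) := by
    intro f hf
    rw [hνdef, Measure.integral_compProd hf]
    refine setIntegral_congr_fun measurableSet_Ioi fun t ht => ?_
    rw [hκ t ht]
  -- measurability helpers
  have hmF : ∀ r : ℝ, Measurable fun p : ℝ × ℝ =>
      (Real.exp (-p.1) - Real.exp (-(r * p.1 + θ * p.2))) / p.1 := fun r =>
    ((measurable_fst.neg.exp).sub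
      (((measurable_fst.const_mul r).add (measurable_snd.const_mul θ)).neg.exp)).div
      measurable_fst
  have hmF' : ∀ r : ℝ, Measurable fun p : ℝ × ℝ => Real.exp (-(r * p.1 + θ * p.2)) := fun r =>
    (((measurable_fst.const_mul r).add (measurable_snd.const_mul θ)).neg.exp)
  have hmf : ∀ q : ℝ, Measurable fun p : ℝ × ℝ =>
      ENNReal.ofReal (|Real.exp (-p.1) - Real.exp (-(q * p.1 + θ * p.2))| / p.1) := fun q =>
    ENNReal.measurable_ofReal.comp ((((measurable_fst.neg.exp).sub
      (((measurable_fst.const_mul q).add (measurable_snd.const_mul θ)).neg.exp)).abs).div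
      measurable_fst)
  -- exponential comparison integral
  have hexp : ∀ c m : ℝ, 0 ≤ c → 0 < m →
      ∫⁻ p : ℝ × ℝ, ENNReal.ofReal (c * Real.exp (-m * p.1)) ∂ν < ⊤ := by
    intro c m hc hm
    have hmm : Measurable fun p : ℝ × ℝ => ENNReal.ofReal (c * Real.exp (-m * p.1)) :=
      ENNReal.measurable_ofReal.comp ((measurable_fst.const_mul (-m)).exp.const_mul c)
    rw [hνdef, Measure.lintegral_compProd hmm]
    have hb : ∀ t : ℝ, ∫⁻ _ : ℝ, ENNReal.ofReal (c * Real.exp (-m * t)) ∂(κ t)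
        ≤ ENNReal.ofReal (c * Real.exp (-m * t)) := by
      intro t
      rw [lintegral_const]
      calc ENNReal.ofReal (c * Real.exp (-m * t)) * κ t univ
          ≤ ENNReal.ofReal (c * Real.exp (-m * t)) * 1 := by gcongr; exact hκle t
        _ = _ := mul_one _
    refine lt_of_le_of_lt (lintegral_mono hb) ?_
    exact ((exp_neg_integrableOn_Ioi 0 hm).const_mul c).lintegral_lt_top
  -- finiteness of the defining integral, compProd form
  have h1ν : ∀ q : ℝ, 0 < q → ∫⁻ p : ℝ × ℝ,
      ENNReal.ofReal (|Real.exp (-p.1) - Real.exp (-(q * p.1 + θ * p.2))| / p.1) ∂ν < ⊤ := by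
    intro q hq
    have hm0 : 0 < min q q₀ := lt_min hq hq₀
    have hbd : ∀ᵐ p : ℝ × ℝ ∂ν,
        ENNReal.ofReal (|Real.exp (-p.1) - Real.exp (-(q * p.1 + θ * p.2))| / p.1)
          ≤ ENNReal.ofReal (|Real.exp (-p.1) - Real.exp (-(q₀ * p.1 + θ * p.2))| / p.1)
            + ENNReal.ofReal (|q - q₀| * Real.exp (-(min q q₀) * p.1)) := by
      filter_upwards [hsupp] with p hp
      obtain ⟨ht, hx⟩ := hp
      have ht' : p.1 ≠ 0 := ne_of_gt ht
      have habs : |Real.exp (-(q₀ * p.1 + θ * p.2)) - Real.exp (-(q * p.1 + θ * p.2))|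
          ≤ |q - q₀| * p.1 * Real.exp (-(min q q₀) * p.1) := by
        refine le_trans (abs_exp_neg_sub_le _ _) ?_
        have h1 : |q₀ * p.1 + θ * p.2 - (q * p.1 + θ * p.2)| = |q - q₀| * p.1 := by
          rw [show q₀ * p.1 + θ * p.2 - (q * p.1 + θ * p.2) = (q₀ - q) * p.1 by ring,
            abs_mul, abs_of_pos ht, abs_sub_comm]
        rw [h1]
        have h2 : min q q₀ * p.1 ≤ min (q₀ * p.1 + θ * p.2) (q * p.1 + θ * p.2) := by
          apply le_min
          · nlinarith [min_le_right q q₀, mul_nonneg hθ hx.le]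
          · nlinarith [min_le_left q q₀, mul_nonneg hθ hx.le]
        rw [neg_mul]
        exact mul_le_mul_of_nonneg_left (Real.exp_le_exp.mpr (neg_le_neg h2))
          (mul_nonneg (abs_nonneg _) ht.le)
      have htri := abs_sub_le (Real.exp (-p.1)) (Real.exp (-(q₀ * p.1 + θ * p.2)))
        (Real.exp (-(q * p.1 + θ * p.2)))
      have hpoint : |Real.exp (-p.1) - Real.exp (-(q * p.1 + θ * p.2))| / p.1
          ≤ |Real.exp (-p.1) - Real.exp (-(q₀ * p.1 + θ * p.2))| / p.1
            + |q - q₀| * Real.exp (-(min q q₀) * p.1) := by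
        have h3 : |Real.exp (-p.1) - Real.exp (-(q * p.1 + θ * p.2))|
            ≤ |Real.exp (-p.1) - Real.exp (-(q₀ * p.1 + θ * p.2))|
              + |q - q₀| * p.1 * Real.exp (-(min q q₀) * p.1) := htri.trans (by linarith)
        calc |Real.exp (-p.1) - Real.exp (-(q * p.1 + θ * p.2))| / p.1
            ≤ (|Real.exp (-p.1) - Real.exp (-(q₀ * p.1 + θ * p.2))|
              + |q - q₀| * p.1 * Real.exp (-(min q q₀) * p.1)) / p.1 :=
              (div_le_div_iff_of_pos_right ht).mpr h3
          _ = _ := by field_simp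
      calc ENNReal.ofReal (|Real.exp (-p.1) - Real.exp (-(q * p.1 + θ * p.2))| / p.1)
          ≤ ENNReal.ofReal (|Real.exp (-p.1) - Real.exp (-(q₀ * p.1 + θ * p.2))| / p.1
            + |q - q₀| * Real.exp (-(min q q₀) * p.1)) := ENNReal.ofReal_le_ofReal hpoint
        _ = _ := ENNReal.ofReal_add (by positivity) (by positivity)
    calc ∫⁻ p : ℝ × ℝ,
        ENNReal.ofReal (|Real.exp (-p.1) - Real.exp (-(q * p.1 + θ * p.2))| / p.1) ∂ν
        ≤ ∫⁻ p : ℝ × ℝ,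
          (ENNReal.ofReal (|Real.exp (-p.1) - Real.exp (-(q₀ * p.1 + θ * p.2))| / p.1)
            + ENNReal.ofReal (|q - q₀| * Real.exp (-(min q q₀) * p.1))) ∂ν :=
          lintegral_mono_ae hbd
      _ = (∫⁻ p : ℝ × ℝ,
          ENNReal.ofReal (|Real.exp (-p.1) - Real.exp (-(q₀ * p.1 + θ * p.2))| / p.1) ∂ν)
          + ∫⁻ p : ℝ × ℝ, ENNReal.ofReal (|q - q₀| * Real.exp (-(min q q₀) * p.1)) ∂ν :=
          lintegral_add_left (hmf q₀) _
      _ < ⊤ := ENNReal.add_lt_top.mpr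
          ⟨(hlift _ (hmf q₀)).trans_lt hint, hexp _ _ (abs_nonneg _) hm0⟩
  -- integrability of the integrand
  have hInt : ∀ q : ℝ, 0 < q → Integrable
      (fun p : ℝ × ℝ => (Real.exp (-p.1) - Real.exp (-(q * p.1 + θ * p.2))) / p.1) ν := by
    intro q hq
    refine ⟨(hmF q).aestronglyMeasurable, ?_⟩
    have hnorm : ∫⁻ p : ℝ × ℝ,
        (‖(Real.exp (-p.1) - Real.exp (-(q * p.1 + θ * p.2))) / p.1‖₊ : ℝ≥0∞) ∂ν
        = ∫⁻ p : ℝ × ℝ,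
          ENNReal.ofReal (|Real.exp (-p.1) - Real.exp (-(q * p.1 + θ * p.2))| / p.1) ∂ν := by
      refine lintegral_congr_ae (hsupp.mono fun p hp => ?_)
      simp only [← enorm_eq_nnnorm, Real.enorm_eq_ofReal_abs, abs_div, abs_of_pos hp.1]
    exact hnorm.trans_lt (h1ν q hq)
  -- the derivative, by differentiation under the integral sign
  have key : ∀ q : ℝ, 0 < q →
      Integrable (fun p : ℝ × ℝ => Real.exp (-(q * p.1 + θ * p.2))) ν ∧
      HasDerivAt (fun r : ℝ => ∫ p : ℝ × ℝ,
          (Real.exp (-p.1) - Real.exp (-(r * p.1 + θ * p.2))) / p.1 ∂ν)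
        (∫ p : ℝ × ℝ, Real.exp (-(q * p.1 + θ * p.2)) ∂ν) q := by
    intro q hq
    refine hasDerivAt_integral_of_dominated_loc_of_deriv_le
      (F' := fun r (p : ℝ × ℝ) => Real.exp (-(r * p.1 + θ * p.2)))
      (bound := fun p : ℝ × ℝ => Real.exp (-(q/2) * p.1))
      (Metric.ball_mem_nhds q (show (0:ℝ) < q/2 by positivity))
      (Filter.Eventually.of_forall fun r => (hmF r).aestronglyMeasurable)
      (hInt q hq) ((hmF' q).aestronglyMeasurable) ?_ ?_ ?_
    · filter_upwards [hsupp] with p hp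
      intro r hr
      rw [Real.norm_eq_abs, Real.abs_exp]
      apply Real.exp_le_exp.mpr
      rw [Metric.mem_ball, Real.dist_eq, abs_sub_lt_iff] at hr
      nlinarith [mul_nonneg hθ hp.2.le, hp.1]
    · refine ⟨(measurable_fst.const_mul (-(q/2))).exp.aestronglyMeasurable, ?_⟩
      have hnorm : ∫⁻ p : ℝ × ℝ, (‖Real.exp (-(q/2) * p.1)‖₊ : ℝ≥0∞) ∂ν
          = ∫⁻ p : ℝ × ℝ, ENNReal.ofReal (1 * Real.exp (-(q/2) * p.1)) ∂ν := by
        refine lintegral_congr fun p => ?_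
        simp only [← enorm_eq_nnnorm, Real.enorm_eq_ofReal_abs, Real.abs_exp, one_mul]
      exact hnorm.trans_lt (hexp 1 (q/2) zero_le_one (by positivity))
    · filter_upwards [hsupp] with p hp
      intro r hr
      have ht' : p.1 ≠ 0 := ne_of_gt hp.1
      have h1 : HasDerivAt (fun s : ℝ => -(s * p.1 + θ * p.2)) (-p.1) r :=
        (((hasDerivAt_mul_const p.1).add_const (θ * p.2)).neg)
      have h2 := h1.exp
      have h3 := h2.const_sub (Real.exp (-p.1))
      have h4 := h3.div_const p.1
      refine h4.congr_deriv ?_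
      rw [div_eq_iff ht']; ring
  -- G eventually agrees with the compProd integral
  have hGev : ∀ q : ℝ, 0 < q → G =ᶠ[nhds q] fun r : ℝ => ∫ p : ℝ × ℝ,
      (Real.exp (-p.1) - Real.exp (-(r * p.1 + θ * p.2))) / p.1 ∂ν := by
    intro q hq
    filter_upwards [isOpen_Ioi.mem_nhds (show q ∈ Ioi (0:ℝ) from hq)] with r hr
    exact (hG r).trans (hliftI _ (hInt r hr)).symm
  have hGd : ∀ q : ℝ, 0 < q →
      HasDerivAt G (∫ p : ℝ × ℝ, Real.exp (-(q * p.1 + θ * p.2)) ∂ν) q := fun q hq =>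
    ((key q hq).2).congr_of_eventuallyEq (hGev q hq)
  refine ⟨fun q hq => (hlift _ (hmf q)).symm.trans_lt (h1ν q hq),
    fun q hq => (hGd q hq).differentiableAt, fun q hq => ?_⟩
  rw [(hGd q hq).deriv]
  exact (integral_const_mul q _).symm.trans (hliftI _ (((key q hq).1).const_mul q))
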